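/- Let Γ^(n) denote the determinant of the n×n matrix with entries Γ^(n)_{i+1,k+1} = Γ((i+k+1)/2)(1 + (-1)^{i+k}), i,k = 0,…,n-1, where Γ is the Gamma function. Then Γ^(n) > 0 for all n ≥ 1. -/

import Mathlib

/-- The determinant Γ⁽ⁿ⁾ of the matrix with entries Γ((i+k+1)/2)(1+(-1)^{i+k}). -/
noncomputable def GammaDet (n : ℕ) : ℝ :=
  (Matrix.of fun i k : Fin n =>
    Real.Gamma (((i : ℝ) + (k : ℝ) + 1)/2) * (1 + (-1 : ℝ)^((i : ℕ) + (k : ℕ)))).det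

open MeasureTheory Real Set

noncomputable def uu (k : ℕ) (x : ℝ) : ℝ :=
  (if x < 0 then (-1:ℝ)^k else 1) * |x| ^ ((2*(k:ℝ)-1)/4) * Real.exp (-|x|/2)

lemma uu_prod_pos {i k : ℕ} {x : ℝ} (hx : 0 < x) :
    uu i x * uu k x = Real.exp (-x) * x ^ ((((i:ℝ)+(k:ℝ)+1)/2) - 1) := by
  have h1 : ¬ x < 0 := not_lt.mpr hx.le
  have h2 : |x| = x := abs_of_pos hx
  simp only [uu, h1, if_false, h2, one_mul]
  rw [mul_mul_mul_comm, ← Real.rpow_add hx, ← Real.exp_add]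
  ring_nf

lemma uu_prod_neg {i k : ℕ} {x : ℝ} (hx : 0 < x) :
    uu i (-x) * uu k (-x)
      = (-1:ℝ)^(i+k) * (Real.exp (-x) * x ^ ((((i:ℝ)+(k:ℝ)+1)/2) - 1)) := by
  have h1 : (-x) < 0 := neg_neg_iff_pos.mpr hx
  have h2 : |(-x)| = x := by rw [abs_neg, abs_of_pos hx]
  simp only [uu, h1, if_true, h2]
  rw [pow_add]
  rw [show ((-1:ℝ)^i * x ^ ((2*(i:ℝ)-1)/4) * Real.exp (-x/2)) *
      ((-1:ℝ)^k * x ^ ((2*(k:ℝ)-1)/4) * Real.exp (-x/2))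
      = ((-1:ℝ)^i * (-1:ℝ)^k) * ((x ^ ((2*(i:ℝ)-1)/4) * x ^ ((2*(k:ℝ)-1)/4))
        * (Real.exp (-x/2) * Real.exp (-x/2))) by ring]
  rw [← Real.rpow_add hx, ← Real.exp_add]
  ring_nf


lemma s_pos (i k : ℕ) : 0 < ((i:ℝ)+(k:ℝ)+1)/2 := by positivity

lemma intOn_Ioi (i k : ℕ) : IntegrableOn (fun x => uu i x * uu k x) (Ioi 0) := by
  exact (Real.GammaIntegral_convergent (s_pos i k)).congr_fun
    (fun x hx => (uu_prod_pos hx).symm) measurableSet_Ioi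

lemma intOn_Iio (i k : ℕ) : IntegrableOn (fun x => uu i x * uu k x) (Iio 0) := by
  have base : IntegrableOn
      (fun x => (-1:ℝ)^(i+k) * (Real.exp (-x) * x ^ ((((i:ℝ)+(k:ℝ)+1)/2) - 1))) (Ioi 0) :=
    (Real.GammaIntegral_convergent (s_pos i k)).const_mul _
  have h : IntegrableOn (fun x => uu i (-x) * uu k (-x)) (Ioi 0) :=
    base.congr_fun (fun x hx => (uu_prod_neg hx).symm) measurableSet_Ioi
  rw [IntegrableOn, ← Measure.map_neg_eq_self (volume : Measure ℝ)]
  have m : MeasurableEmbedding fun x : ℝ => -x := (Homeomorph.neg ℝ).measurableEmbedding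
  rw [m.restrict_map, m.integrable_map_iff]
  simpa [Function.comp_def, neg_Iio, IntegrableOn] using h

lemma integrable_prod (i k : ℕ) : Integrable (fun x => uu i x * uu k x) := by
  have h := (intOn_Iio i k).union
    ((integrableOn_Ici_iff_integrableOn_Ioi enorm_ne_top).mpr (intOn_Ioi i k))
  rwa [Iio_union_Ici, integrableOn_univ] at h

lemma integral_prod (i k : ℕ) :
    ∫ x, uu i x * uu k x
      = Real.Gamma (((i:ℝ)+(k:ℝ)+1)/2) * (1 + (-1:ℝ)^(i+k)) := by
  rw [← intervalIntegral.integral_Iic_add_Ioi ((integrableOn_Iic_iff_integrableOn_Iio enorm_ne_top).mpr (intOn_Iio i k))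
    (intOn_Ioi i k)]
  have h1 : ∫ x in Ioi (0:ℝ), uu i x * uu k x = Real.Gamma (((i:ℝ)+(k:ℝ)+1)/2) := by
    rw [Real.Gamma_eq_integral (s_pos i k)]
    exact setIntegral_congr_fun measurableSet_Ioi (fun x hx => uu_prod_pos hx)
  have h2 : ∫ x in Iic (0:ℝ), uu i x * uu k x
      = (-1:ℝ)^(i+k) * Real.Gamma (((i:ℝ)+(k:ℝ)+1)/2) := by
    rw [show (0:ℝ) = -0 by norm_num, ← integral_comp_neg_Ioi]
    rw [setIntegral_congr_fun measurableSet_Ioi (fun x (hx : x ∈ Ioi (0:ℝ)) => uu_prod_neg hx)]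
    rw [integral_const_mul, Real.Gamma_eq_integral (s_pos i k)]
  rw [h1, h2]; ring



lemma uu_pos_val {k : ℕ} {x : ℝ} (hx : 0 < x) :
    uu k x = x ^ ((2*(k:ℝ)-1)/4) * Real.exp (-x/2) := by
  simp [uu, not_lt.mpr hx.le, abs_of_pos hx]

lemma uu_continuousAt {k : ℕ} {x : ℝ} (hx : 0 < x) : ContinuousAt (uu k) x := by
  have h : ContinuousAt (fun y : ℝ => y ^ ((2*(k:ℝ)-1)/4) * Real.exp (-y/2)) x := by
    exact (Real.continuousAt_rpow_const x _ (Or.inl hx.ne')).mul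
      ((Real.continuous_exp.comp (continuous_id.neg.div_const 2)).continuousAt)
  refine h.congr ?_
  filter_upwards [isOpen_Ioi.mem_nhds hx] with y hy
  exact (uu_pos_val hy).symm

-- if c ≠ 0 then there is x0 > 0 with ∑ c k * uu k x0 ≠ 0
lemma exists_pos_ne_zero {n : ℕ} {c : Fin n → ℝ} (hc : c ≠ 0) :
    ∃ x : ℝ, 0 < x ∧ (∑ k : Fin n, c k * uu k x) ≠ 0 := by
  classical
  set q : Polynomial ℝ := ∑ k : Fin n, Polynomial.C (c k) * Polynomial.X ^ (k : ℕ) with hq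
  have hcoeff : ∀ j : Fin n, q.coeff (j : ℕ) = c j := by
    intro j
    rw [hq, Polynomial.finset_sum_coeff]
    rw [Finset.sum_eq_single j]
    · simp
    · intro b _ hb
      rw [Polynomial.coeff_C_mul, Polynomial.coeff_X_pow]
      rw [if_neg (fun h : (j:ℕ) = (b:ℕ) => hb (Fin.val_injective h).symm), mul_zero]
    · simp
  have hq0 : q ≠ 0 := by
    intro h
    apply hc
    funext j
    have := hcoeff j
    rw [h] at this
    simpa using this.symm
  obtain ⟨t, ht⟩ : ∃ t, t ∈ Ioi (0:ℝ) \ {x | q.IsRoot x} :=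
    ((Set.Ioi_infinite (0:ℝ)).diff (Polynomial.finite_setOf_isRoot hq0)).nonempty
  obtain ⟨ht0, htr⟩ := ht
  have ht0 : (0:ℝ) < t := ht0
  refine ⟨t ^ (2:ℕ), by positivity, ?_⟩
  have key : ∀ k : Fin n, uu k (t ^ (2:ℕ)) = (t ^ (-(1:ℝ)/2) * Real.exp (-(t^(2:ℕ))/2)) * t ^ (k:ℕ) := by
    intro k
    rw [uu_pos_val (by positivity)]
    rw [← Real.rpow_natCast t 2, ← Real.rpow_mul ht0.le]
    rw [show ((2:ℕ):ℝ) * ((2*(k:ℝ)-1)/4) = (k:ℝ) + (-(1:ℝ)/2) by push_cast; ring]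
    rw [Real.rpow_add ht0, Real.rpow_natCast]
    ring
  simp_rw [key]
  rw [show (∑ k : Fin n, c k * ((t ^ (-(1:ℝ)/2) * Real.exp (-(t^(2:ℕ))/2)) * t ^ (k:ℕ)))
      = (t ^ (-(1:ℝ)/2) * Real.exp (-(t^(2:ℕ))/2)) * ∑ k : Fin n, c k * t ^ (k:ℕ) by
    rw [Finset.mul_sum]; congr 1; funext k; ring]
  have hev : Polynomial.eval t q = ∑ k : Fin n, c k * t ^ (k:ℕ) := by
    rw [hq]; simp [Polynomial.eval_finset_sum]
  have hne : (∑ k : Fin n, c k * t ^ (k:ℕ)) ≠ 0 := by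
    rw [← hev]; exact htr
  have h1 : t ^ (-(1:ℝ)/2) ≠ 0 := by positivity
  have h2 : Real.exp (-(t^(2:ℕ))/2) ≠ 0 := Real.exp_ne_zero _
  exact mul_ne_zero (mul_ne_zero h1 h2) hne

lemma sq_expand {n : ℕ} (c : Fin n → ℝ) (x : ℝ) :
    (∑ k : Fin n, c k * uu k x) * (∑ k : Fin n, c k * uu k x)
      = ∑ i : Fin n, ∑ k : Fin n, (c i * c k) * (uu i x * uu k x) := by
  rw [Finset.sum_mul_sum]
  exact Finset.sum_congr rfl fun i _ => Finset.sum_congr rfl fun k _ => by ring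

lemma integrable_sq {n : ℕ} (c : Fin n → ℝ) :
    Integrable (fun x => (∑ k : Fin n, c k * uu k x) * (∑ k : Fin n, c k * uu k x)) := by
  have hsum : Integrable
      (fun x => ∑ i : Fin n, ∑ k : Fin n, (c i * c k) * (uu i x * uu k x)) volume :=
    integrable_finset_sum _ (fun i _ => integrable_finset_sum _
      (fun k _ => (integrable_prod (i:ℕ) (k:ℕ)).const_mul _))
  exact hsum.congr (Filter.Eventually.of_forall fun x => (sq_expand c x).symm)

lemma quad_eq {n : ℕ} (c : Fin n → ℝ) :
    dotProduct c
      ((Matrix.of fun i k : Fin n =>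
        Real.Gamma (((i : ℝ) + (k : ℝ) + 1)/2) * (1 + (-1 : ℝ)^((i : ℕ) + (k : ℕ)))).mulVec c)
      = ∫ x, (∑ k : Fin n, c k * uu k x) * (∑ k : Fin n, c k * uu k x) := by
  rw [MeasureTheory.integral_congr_ae (Filter.Eventually.of_forall (sq_expand c))]
  rw [MeasureTheory.integral_finset_sum _ (fun (i : Fin n) _ =>
    integrable_finset_sum _ (fun (k : Fin n) _ =>
      (integrable_prod (i:ℕ) (k:ℕ)).const_mul (c i * c k)))]
  have inner : ∀ i : Fin n,
      (∫ x, ∑ k : Fin n, (c i * c k) * (uu i x * uu k x))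
        = ∑ k : Fin n, (c i * c k) *
            (Real.Gamma ((((i:ℕ):ℝ) + ((k:ℕ):ℝ) + 1)/2) * (1 + (-1:ℝ)^((i:ℕ) + (k:ℕ)))) := by
    intro i
    rw [MeasureTheory.integral_finset_sum _ (fun (k : Fin n) _ =>
      (integrable_prod (i:ℕ) (k:ℕ)).const_mul (c i * c k))]
    exact Finset.sum_congr rfl fun k _ => by
      rw [MeasureTheory.integral_const_mul, integral_prod]
  rw [Finset.sum_congr rfl fun i _ => inner i]
  simp only [dotProduct, Matrix.mulVec, Matrix.of_apply]
  exact Finset.sum_congr rfl fun i _ => by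
    rw [Finset.mul_sum]
    exact Finset.sum_congr rfl fun k _ => by ring

lemma gamma_posDef (n : ℕ) :
    (Matrix.of fun i k : Fin n =>
      Real.Gamma (((i : ℝ) + (k : ℝ) + 1)/2) * (1 + (-1 : ℝ)^((i : ℕ) + (k : ℕ)))).PosDef := by
  refine Matrix.PosDef.of_dotProduct_mulVec_pos ?_ ?_
  · ext i k
    simp only [Matrix.conjTranspose_apply, Matrix.of_apply, star_trivial]
    rw [add_comm ((k : Fin n) : ℝ) ((i : Fin n) : ℝ), add_comm ((k : Fin n) : ℕ) ((i : Fin n) : ℕ)]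
  · intro c hc
    rw [show star c = c from funext fun i => star_trivial (c i)]
    rw [quad_eq]
    rw [MeasureTheory.integral_pos_iff_support_of_nonneg_ae
      (Filter.Eventually.of_forall fun x => mul_self_nonneg _) (integrable_sq c)]
    obtain ⟨x0, hx0, hfx0⟩ := exists_pos_ne_zero hc
    have hcont : ContinuousAt (fun x => ∑ k : Fin n, c k * uu k x) x0 :=
      tendsto_finset_sum _ fun k _ =>
        (continuousAt_const.mul (uu_continuousAt hx0) : ContinuousAt _ x0)
    have hev : ∀ᶠ x in nhds x0, (∑ k : Fin n, c k * uu k x) ≠ 0 := hcont.eventually_ne hfx0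
    obtain ⟨ε, hε, hball⟩ := Metric.eventually_nhds_iff_ball.mp hev
    calc (0 : ENNReal) < volume (Metric.ball x0 ε) := Metric.measure_ball_pos volume x0 hε
      _ ≤ _ := by
          apply measure_mono
          intro y hy
          exact mul_self_ne_zero.mpr (hball y hy)

theorem stmt10 : ∀ n : ℕ, 1 ≤ n → 0 < GammaDet n := by
  intro n _
  exact (gamma_posDef n).det_pos
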